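/- Let θ be a compatible unital action of an inverse monoid S on a K-algebra A. Then the family {θ̃_g}_{g ∈ G(S)} with domains D_g = Σ_{s∈g} 1_s A is a partial action of the maximum group image G(S) on A; in particular θ̃_g ∘ θ̃_h ≤ θ̃_{gh} and θ̃_h(D_{h⁻¹} ∩ D_{h⁻¹g⁻¹}) = D_h ∩ D_{g⁻¹} for all g,h ∈ G(S). -/

import Mathlib

/-- An inverse monoid structure on a monoid `S`: every element `s` has a unique
generalized inverse `inv s`. -/
structure InverseMonoidStr (S : Type*) [Monoid S] where
  inv : S → S
  mul_inv_mul : ∀ s, s * inv s * s = s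
  inv_mul_inv : ∀ s, inv s * s * inv s = inv s
  inv_unique : ∀ s t, s * t * s = s → t * s * t = t → t = inv s

/-- The natural partial order of an inverse monoid: `s ≤ t` iff `s = f * t`
for some idempotent `f`. -/
def natLE {S : Type*} [Monoid S] (s t : S) : Prop := ∃ f : S, f * f = f ∧ s = f * t

/-- The minimum group congruence `σ` on an inverse monoid:
`(s, t) ∈ σ` iff there is `u` with `u ≤ s` and `u ≤ t`. -/
def sigmaRel {S : Type*} [Monoid S] (s t : S) : Prop := ∃ u : S, natLE u s ∧ natLE u t

/-- An inverse monoid is `E`-unitary if `e ≤ s` with `e` idempotent implies that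
`s` is idempotent. -/
def EUnitary (S : Type*) [Monoid S] : Prop :=
  ∀ u s : S, u * u = u → natLE u s → s * s = s

/-- A unital action `θ` of an inverse monoid `S` on a unital `K`-algebra `A`.
Each `θ s` is an algebra isomorphism from the unital ideal `1_{s⁻¹}A` onto the
unital ideal `1_s A`, where `1_s = e s` is a central idempotent of `A`; here the
partially defined map `θ_s` is encoded by the globally defined map
`a ↦ θ_s(1_{s⁻¹}·a)`, and `θ : S → I(A)` is a homomorphism of monoids with
`θ 1 = id`. -/
structure UnitalAction (K : Type*) [CommRing K] {S : Type*} [Monoid S]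
    (I : InverseMonoidStr S) (A : Type*) [Ring A] [Algebra K A] where
  θ : S → A → A
  e : S → A
  e_idem : ∀ s, e s * e s = e s
  e_central : ∀ s (a : A), e s * a = a * e s
  e_one : e 1 = 1
  theta_add : ∀ s (a b : A), θ s (a + b) = θ s a + θ s b
  theta_mul : ∀ s (a b : A), θ s (a * b) = θ s a * θ s b
  theta_smul : ∀ s (k : K) (a : A), θ s (k • a) = k • θ s a
  theta_dom : ∀ s (a : A), θ s (e (I.inv s) * a) = θ s a
  theta_ran : ∀ s (a : A), e s * θ s a = θ s a
  theta_comp : ∀ s t (a : A), θ (s * t) a = θ s (θ t a)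
  theta_one : ∀ a : A, θ 1 a = a
  theta_inv : ∀ s (a : A), θ (I.inv s) (θ s a) = e (I.inv s) * a
  theta_e : ∀ s, θ s 1 = e s

namespace UnitalAction

variable {K : Type*} [CommRing K] {S : Type*} [Monoid S] {I : InverseMonoidStr S}
  {A : Type*} [Ring A] [Algebra K A]

/-- An action `θ` of `S` on `A` is compatible if `θ_s` and `θ_t` agree on the
intersection `1_{s⁻¹}A ∩ 1_{t⁻¹}A` of their domains whenever `(s,t) ∈ σ`. -/
def Compatible (T : UnitalAction K I A) : Prop :=
  ∀ s t, sigmaRel s t → ∀ a : A, T.θ s (T.e (I.inv t) * a) = T.θ t (T.e (I.inv s) * a)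

/-- The `K`-submodule `D_g = Σ_{s ∈ g} 1_s A` of `A` attached to the σ-class of `t`. -/
def Dsub (T : UnitalAction K I A) (t : S) : Submodule K A :=
  Submodule.span K {x : A | ∃ s : S, ∃ a : A, sigmaRel s t ∧ x = T.e s * a}

/-- The `K`-module `L(A,θ,S) = ⊕_{s ∈ S} 1_s A δ_s` is carried by finitely supported
functions `S →₀ A`; its multiplication is `a δ_s · b δ_t = a θ_s(1_{s⁻¹} b) δ_{st}`. -/
noncomputable def lmul (T : UnitalAction K I A) (f g : S →₀ A) : S →₀ A :=
  f.sum fun s a => g.sum fun t b => Finsupp.single (s * t) (a * T.θ s b)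

/-- The carrier of `L(A,θ,S)` inside `S →₀ A`: functions whose value at `s`
lies in `1_s A`. -/
def LSet (T : UnitalAction K I A) : Set (S →₀ A) :=
  {f : S →₀ A | ∀ s, T.e s * f s = f s}

/-- The generating set `X = {a δ_s − a δ_t : a ∈ 1_s A, s ≤ t}` of the ideal `N`. -/
def XSet (T : UnitalAction K I A) : Set (S →₀ A) :=
  {x : S →₀ A | ∃ s t : S, ∃ a : A, natLE s t ∧ T.e s * a = a ∧
    x = Finsupp.single s a - Finsupp.single t a}

end UnitalAction

namespace InverseMonoidStr

variable {S : Type*} [Monoid S]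

theorem inv_idem (I : InverseMonoidStr S) {f : S} (hf : f * f = f) : I.inv f = f :=
  (I.inv_unique f f (by rw [hf, hf]) (by rw [hf, hf])).symm

theorem inv_inv (I : InverseMonoidStr S) (s : S) : I.inv (I.inv s) = s :=
  (I.inv_unique (I.inv s) s (I.inv_mul_inv s) (I.mul_inv_mul s)).symm

theorem inv_one (I : InverseMonoidStr S) : I.inv (1 : S) = 1 := I.inv_idem (mul_one 1)

theorem mul_inv_idem (I : InverseMonoidStr S) (s : S) :
    (s * I.inv s) * (s * I.inv s) = s * I.inv s := by
  have h : s * I.inv s * s = s := I.mul_inv_mul s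
  calc s * I.inv s * (s * I.inv s) = (s * I.inv s * s) * I.inv s := by
        simp only [mul_assoc]
    _ = s * I.inv s := by rw [h]

theorem inv_mul_idem (I : InverseMonoidStr S) (s : S) :
    (I.inv s * s) * (I.inv s * s) = I.inv s * s := by
  have h : I.inv s * s * I.inv s = I.inv s := I.inv_mul_inv s
  calc I.inv s * s * (I.inv s * s) = (I.inv s * s * I.inv s) * s := by
        simp only [mul_assoc]
    _ = I.inv s * s := by rw [h]

theorem idem_mul_idem (I : InverseMonoidStr S) {f g : S} (hf : f * f = f) (hg : g * g = g) :
    (f * g) * (f * g) = f * g := by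
  have hf' : ∀ z : S, f * (f * z) = f * z := fun z => by rw [← mul_assoc, hf]
  have hg' : ∀ z : S, g * (g * z) = g * z := fun z => by rw [← mul_assoc, hg]
  set x := I.inv (f * g) with hx
  have h1 : (f * g) * x * (f * g) = f * g := I.mul_inv_mul (f * g)
  have h2 : x * (f * g) * x = x := I.inv_mul_inv (f * g)
  have hgxf : g * x * f = x := by
    refine I.inv_unique (f * g) (g * x * f) ?_ ?_
    · calc f * g * (g * x * f) * (f * g)
          = f * (g * (g * (x * (f * (f * g))))) := by simp only [mul_assoc]
        _ = f * (g * (x * (f * g))) := by rw [hg', hf']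
        _ = (f * g) * x * (f * g) := by simp only [mul_assoc]
        _ = f * g := h1
    · calc g * x * f * (f * g) * (g * x * f)
          = g * (x * (f * (f * (g * (g * (x * f)))))) := by simp only [mul_assoc]
        _ = g * (x * (f * (g * (x * f)))) := by rw [hf', hg']
        _ = g * ((x * (f * g) * x) * f) := by simp only [mul_assoc]
        _ = g * x * f := by rw [h2]; simp only [mul_assoc]
  have hxx : x * x = x := by
    calc x * x = (g * x * f) * (g * x * f) := by rw [hgxf]
    _ = g * ((x * (f * g) * x) * f) := by simp only [mul_assoc]
    _ = g * (x * f) := by rw [h2]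
    _ = x := by rw [← mul_assoc, hgxf]
  have hfg : f * g = x := by
    have h3 := I.inv_unique x (f * g) (by rw [h2]) (by rw [h1])
    rw [h3, I.inv_idem hxx]
  rw [← hfg] at hxx
  exact hxx

theorem idem_comm (I : InverseMonoidStr S) {f g : S} (hf : f * f = f) (hg : g * g = g) :
    f * g = g * f := by
  have hf' : ∀ z : S, f * (f * z) = f * z := fun z => by rw [← mul_assoc, hf]
  have hg' : ∀ z : S, g * (g * z) = g * z := fun z => by rw [← mul_assoc, hg]
  have hfg := I.idem_mul_idem hf hg
  have hgf := I.idem_mul_idem hg hf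
  have h1 : g * f = I.inv (f * g) := by
    refine I.inv_unique (f * g) (g * f) ?_ ?_
    · calc f * g * (g * f) * (f * g) = f * (g * (g * (f * (f * g)))) := by
            simp only [mul_assoc]
        _ = f * (g * (f * g)) := by rw [hg', hf']
        _ = (f * g) * (f * g) := by simp only [mul_assoc]
        _ = f * g := hfg
    · calc g * f * (f * g) * (g * f) = g * (f * (f * (g * (g * f)))) := by
            simp only [mul_assoc]
        _ = g * (f * (g * f)) := by rw [hf', hg']
        _ = (g * f) * (g * f) := by simp only [mul_assoc]
        _ = g * f := hgf
  rw [h1, I.inv_idem hfg]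

theorem mul_inv_rev (I : InverseMonoidStr S) (s t : S) :
    I.inv (s * t) = I.inv t * I.inv s := by
  have hc : (t * I.inv t) * (I.inv s * s) = (I.inv s * s) * (t * I.inv t) :=
    I.idem_comm (I.mul_inv_idem t) (I.inv_mul_idem s)
  refine (I.inv_unique (s * t) (I.inv t * I.inv s) ?_ ?_).symm
  · calc s * t * (I.inv t * I.inv s) * (s * t)
        = s * (((t * I.inv t) * (I.inv s * s)) * t) := by simp only [mul_assoc]
      _ = s * (((I.inv s * s) * (t * I.inv t)) * t) := by rw [hc]
      _ = (s * I.inv s * s) * (t * I.inv t * t) := by simp only [mul_assoc]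
      _ = s * t := by rw [I.mul_inv_mul, I.mul_inv_mul]
  · calc I.inv t * I.inv s * (s * t) * (I.inv t * I.inv s)
        = I.inv t * (((I.inv s * s) * (t * I.inv t)) * I.inv s) := by simp only [mul_assoc]
      _ = I.inv t * (((t * I.inv t) * (I.inv s * s)) * I.inv s) := by rw [← hc]
      _ = (I.inv t * t * I.inv t) * (I.inv s * s * I.inv s) := by simp only [mul_assoc]
      _ = I.inv t * I.inv s := by rw [I.inv_mul_inv, I.inv_mul_inv]

end InverseMonoidStr

section SigmaLemmas

variable {S : Type*} [Monoid S]

theorem natLE_refl (I : InverseMonoidStr S) (s : S) : natLE s s :=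
  ⟨s * I.inv s, I.mul_inv_idem s, (I.mul_inv_mul s).symm⟩

theorem natLE_trans (I : InverseMonoidStr S) {a b c : S} (h1 : natLE a b) (h2 : natLE b c) :
    natLE a c := by
  obtain ⟨f, hf, rfl⟩ := h1
  obtain ⟨g, hg, rfl⟩ := h2
  exact ⟨f * g, I.idem_mul_idem hf hg, by rw [mul_assoc]⟩

theorem natLE_mul_left (I : InverseMonoidStr S) {a b : S} (r : S) (h : natLE a b) :
    natLE (r * a) (r * b) := by
  obtain ⟨f, hf, rfl⟩ := h
  have hc : f * (I.inv r * r) = (I.inv r * r) * f := I.idem_comm hf (I.inv_mul_idem r)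
  refine ⟨r * f * I.inv r, ?_, ?_⟩
  · calc r * f * I.inv r * (r * f * I.inv r)
        = r * ((f * (I.inv r * r)) * (f * I.inv r)) := by simp only [mul_assoc]
      _ = r * (((I.inv r * r) * f) * (f * I.inv r)) := by rw [hc]
      _ = (r * I.inv r * r) * (f * (f * I.inv r)) := by simp only [mul_assoc]
      _ = r * (f * (f * I.inv r)) := by rw [I.mul_inv_mul]
      _ = r * ((f * f) * I.inv r) := by simp only [mul_assoc]
      _ = r * f * I.inv r := by rw [hf]; simp only [mul_assoc]
  · have key : r * (f * (I.inv r * r)) = r * f := by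
      rw [hc]
      calc r * ((I.inv r * r) * f) = (r * I.inv r * r) * f := by simp only [mul_assoc]
        _ = r * f := by rw [I.mul_inv_mul]
    calc r * (f * b) = r * f * b := by rw [mul_assoc]
      _ = r * (f * (I.inv r * r)) * b := by rw [key]
      _ = r * f * I.inv r * (r * b) := by simp only [mul_assoc]

theorem natLE_mul_right (I : InverseMonoidStr S) {a b : S} (r : S) (h : natLE a b) :
    natLE (a * r) (b * r) := by
  obtain ⟨f, hf, rfl⟩ := h
  exact ⟨f, hf, by rw [mul_assoc]⟩

theorem natLE_inv (I : InverseMonoidStr S) {a b : S} (h : natLE a b) :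
    natLE (I.inv a) (I.inv b) := by
  obtain ⟨f, hf, rfl⟩ := h
  have hc : f * (b * I.inv b) = (b * I.inv b) * f := I.idem_comm hf (I.mul_inv_idem b)
  rw [I.mul_inv_rev, I.inv_idem hf]
  refine ⟨I.inv b * f * b, ?_, ?_⟩
  · calc I.inv b * f * b * (I.inv b * f * b)
        = I.inv b * ((f * (b * I.inv b)) * (f * b)) := by simp only [mul_assoc]
      _ = I.inv b * (((b * I.inv b) * f) * (f * b)) := by rw [hc]
      _ = (I.inv b * b * I.inv b) * (f * (f * b)) := by simp only [mul_assoc]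
      _ = I.inv b * (f * (f * b)) := by rw [I.inv_mul_inv]
      _ = I.inv b * ((f * f) * b) := by simp only [mul_assoc]
      _ = I.inv b * f * b := by rw [hf]; simp only [mul_assoc]
  · refine (?_ : (I.inv b * f * b) * I.inv b = I.inv b * f).symm
    calc (I.inv b * f * b) * I.inv b = I.inv b * (f * (b * I.inv b)) := by
          simp only [mul_assoc]
      _ = I.inv b * ((b * I.inv b) * f) := by rw [hc]
      _ = (I.inv b * b * I.inv b) * f := by simp only [mul_assoc]
      _ = I.inv b * f := by rw [I.inv_mul_inv]

theorem natLE_common (I : InverseMonoidStr S) {a b s : S} (h1 : natLE a s) (h2 : natLE b s) :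
    ∃ w, natLE w a ∧ natLE w b := by
  obtain ⟨f, hf, rfl⟩ := h1
  obtain ⟨g, hg, rfl⟩ := h2
  exact ⟨f * g * s, ⟨g, hg, by rw [I.idem_comm hf hg]; simp only [mul_assoc]⟩,
    ⟨f, hf, by simp only [mul_assoc]⟩⟩

theorem sigmaRel_refl (I : InverseMonoidStr S) (s : S) : sigmaRel s s :=
  ⟨s, natLE_refl I s, natLE_refl I s⟩

theorem sigmaRel_symm {s t : S} (h : sigmaRel s t) : sigmaRel t s :=
  ⟨h.choose, h.choose_spec.2, h.choose_spec.1⟩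

theorem sigmaRel_trans (I : InverseMonoidStr S) {s t r : S} (h1 : sigmaRel s t)
    (h2 : sigmaRel t r) : sigmaRel s r := by
  obtain ⟨u, hus, hut⟩ := h1
  obtain ⟨v, hvt, hvr⟩ := h2
  obtain ⟨w, hwu, hwv⟩ := natLE_common I hut hvt
  exact ⟨w, natLE_trans I hwu hus, natLE_trans I hwv hvr⟩

theorem sigmaRel_mul_left (I : InverseMonoidStr S) {s t : S} (r : S) (h : sigmaRel s t) :
    sigmaRel (r * s) (r * t) := by
  obtain ⟨u, h1, h2⟩ := h
  exact ⟨r * u, natLE_mul_left I r h1, natLE_mul_left I r h2⟩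

theorem sigmaRel_mul_right (I : InverseMonoidStr S) {s t : S} (r : S) (h : sigmaRel s t) :
    sigmaRel (s * r) (t * r) := by
  obtain ⟨u, h1, h2⟩ := h
  exact ⟨u * r, natLE_mul_right I r h1, natLE_mul_right I r h2⟩

theorem sigmaRel_inv (I : InverseMonoidStr S) {s t : S} (h : sigmaRel s t) :
    sigmaRel (I.inv s) (I.inv t) := by
  obtain ⟨u, h1, h2⟩ := h
  exact ⟨I.inv u, natLE_inv I h1, natLE_inv I h2⟩

theorem sigmaRel_idem_one (I : InverseMonoidStr S) {f : S} (hf : f * f = f) : sigmaRel f 1 :=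
  ⟨f, natLE_refl I f, ⟨f, hf, (mul_one f).symm⟩⟩

theorem sigmaRel_mul (I : InverseMonoidStr S) {s t s' t' : S} (h1 : sigmaRel s t)
    (h2 : sigmaRel s' t') : sigmaRel (s * s') (t * t') :=
  sigmaRel_trans I (sigmaRel_mul_left I s h2) (sigmaRel_mul_right I t' h1)

end SigmaLemmas

namespace UnitalAction

variable {K : Type*} [CommRing K] {S : Type*} [Monoid S] {I : InverseMonoidStr S}
  {A : Type*} [Ring A] [Algebra K A]

theorem theta_zero (T : UnitalAction K I A) (s : S) : T.θ s 0 = 0 := by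
  have h : T.θ s 0 + T.θ s 0 = T.θ s 0 + 0 := by
    rw [add_zero, ← T.theta_add s 0 0, add_zero]
  exact add_left_cancel h

theorem theta_neg (T : UnitalAction K I A) (s : S) (a : A) : T.θ s (-a) = -T.θ s a := by
  have h : T.θ s a + T.θ s (-a) = 0 := by
    rw [← T.theta_add, add_neg_cancel, T.theta_zero]
  exact eq_neg_of_add_eq_zero_right h

theorem e_mul_comm (T : UnitalAction K I A) (s : S) (x y : A) :
    T.e s * (x * y) = x * (T.e s * y) := by
  rw [← mul_assoc, T.e_central s x, mul_assoc]

theorem theta_of_e (T : UnitalAction K I A) (s r : S) : T.θ s (T.e r) = T.e (s * r) := by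
  rw [← T.theta_e r, ← T.theta_comp, T.theta_e]

theorem e_mul_theta (T : UnitalAction K I A) (s r : S) {c : A} (hc : T.e r * c = c) :
    T.e (s * r) * T.θ s c = T.θ s c := by
  have h : T.θ s c = T.e (s * r) * T.θ s c := by
    conv_lhs => rw [← hc]
    rw [T.theta_mul, T.theta_of_e]
  conv_lhs => rw [h]
  rw [← mul_assoc, T.e_idem, ← h]

theorem theta_sigma_one (T : UnitalAction K I A) (hc : T.Compatible) {u : S}
    (h : sigmaRel u 1) (a : A) : T.θ u a = T.e (I.inv u) * a := by
  have h2 := hc u 1 h a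
  rw [I.inv_one, T.e_one, one_mul, T.theta_one] at h2
  exact h2

theorem e_mul_e (T : UnitalAction K I A) (hc : T.Compatible) {p : S} (hp : p * p = p)
    (r : S) : T.e (p * r) = T.e p * T.e r := by
  rw [← T.theta_e (p * r), T.theta_comp, T.theta_e,
    T.theta_sigma_one hc (sigmaRel_idem_one I hp), I.inv_idem hp]

theorem e_self_absorb (T : UnitalAction K I A) (hc : T.Compatible) (s : S) :
    T.e (s * I.inv s) * T.e s = T.e s := by
  have h : (s * I.inv s) * s = s := I.mul_inv_mul s
  rw [← T.theta_e s]
  conv_rhs => rw [← h]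
  rw [T.theta_comp, T.theta_e, T.theta_sigma_one hc (sigmaRel_idem_one I (I.mul_inv_idem s)),
    I.inv_idem (I.mul_inv_idem s)]

theorem key_absorb (T : UnitalAction K I A) (hc : T.Compatible) (s r : S) {c : A}
    (h1 : T.e s * c = c) (h2 : T.e r * c = c) : T.e ((s * I.inv s) * r) * c = c := by
  rw [T.e_mul_e hc (I.mul_inv_idem s) r, mul_assoc, h2, ← h1, ← mul_assoc,
    T.e_self_absorb hc s, h1]

end UnitalAction

namespace UnitalAction

variable {K : Type*} [CommRing K] {S : Type*} [Monoid S] {I : InverseMonoidStr S}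
  {A : Type*} [Ring A] [Algebra K A]

/-- A list representing an element of `D_{[t]⁻¹}` in the domain form. -/
def GoodL (T : UnitalAction K I A) (t : S) (l : List (S × A)) : Prop :=
  ∀ p ∈ l, sigmaRel p.1 t ∧ T.e (I.inv p.1) * p.2 = p.2

/-- A list representing an element of `D_{[t]}` in the range form. -/
def DList (T : UnitalAction K I A) (t : S) (l : List (S × A)) : Prop :=
  ∀ p ∈ l, sigmaRel p.1 t ∧ T.e p.1 * p.2 = p.2

/-- A list representing an element of `D_{[g]} ∩ D_{[h]}`. -/
def PList (T : UnitalAction K I A) (g h : S) (m : List (S × S × A)) : Prop :=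
  ∀ p ∈ m, sigmaRel p.1 g ∧ sigmaRel p.2.1 h ∧
    T.e p.1 * p.2.2 = p.2.2 ∧ T.e p.2.1 * p.2.2 = p.2.2

def lsum {S : Type*} {A : Type*} [AddCommMonoid A] (l : List (S × A)) : A :=
  (l.map Prod.snd).sum

def msum {S : Type*} {A : Type*} [AddCommMonoid A] (m : List (S × S × A)) : A :=
  (m.map fun p => p.2.2).sum

def leval (T : UnitalAction K I A) (l : List (S × A)) : A :=
  (l.map fun p => T.θ p.1 p.2).sum

@[simp] theorem lsum_nil {S A : Type*} [AddCommMonoid A] : lsum ([] : List (S × A)) = 0 := rfl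
@[simp] theorem lsum_cons {S A : Type*} [AddCommMonoid A] (p : S × A) (l : List (S × A)) :
    lsum (p :: l) = p.2 + lsum l := by simp [lsum]
@[simp] theorem lsum_append {S A : Type*} [AddCommMonoid A] (l l' : List (S × A)) :
    lsum (l ++ l') = lsum l + lsum l' := by simp [lsum]
@[simp] theorem msum_nil {S A : Type*} [AddCommMonoid A] : msum ([] : List (S × S × A)) = 0 := rfl
@[simp] theorem msum_cons {S A : Type*} [AddCommMonoid A] (p : S × S × A) (m : List (S × S × A)) :
    msum (p :: m) = p.2.2 + msum m := by simp [msum]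
@[simp] theorem msum_append {S A : Type*} [AddCommMonoid A] (m m' : List (S × S × A)) :
    msum (m ++ m') = msum m + msum m' := by simp [msum]
@[simp] theorem leval_nil (T : UnitalAction K I A) : leval T ([] : List (S × A)) = 0 := rfl
@[simp] theorem leval_cons (T : UnitalAction K I A) (p : S × A) (l : List (S × A)) :
    leval T (p :: l) = T.θ p.1 p.2 + leval T l := by simp [leval]
@[simp] theorem leval_append (T : UnitalAction K I A) (l l' : List (S × A)) :
    leval T (l ++ l') = leval T l + leval T l' := by simp [leval]

theorem lsum_map {S A B : Type*} [AddCommMonoid A] (l : List (S × B)) (f : S × B → S × A) :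
    lsum (l.map f) = (l.map fun q => (f q).2).sum := by
  rw [lsum, List.map_map]; rfl

theorem leval_map {B : Type*} (T : UnitalAction K I A) (l : List (S × B)) (f : S × B → S × A) :
    leval T (l.map f) = (l.map fun q => T.θ (f q).1 (f q).2).sum := by
  rw [leval, List.map_map]; rfl

theorem theta_lsum (T : UnitalAction K I A) (s : S) (l : List (S × A)) :
    T.θ s (lsum l) = (l.map fun p => T.θ s p.2).sum := by
  induction l with
  | nil => simp [T.theta_zero]
  | cons p l ih => simp [T.theta_add, ih]

theorem lsum_map_sub {S A : Type*} [Ring A] (E : A) (l : List (S × A)) :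
    lsum (l.map fun q : S × A => (q.1, q.2 - E * q.2)) = lsum l - E * lsum l := by
  induction l with
  | nil => simp
  | cons q m ih =>
    simp only [List.map_cons, lsum_cons, mul_add]
    rw [ih]
    abel

theorem lsum_map_neg {S A : Type*} [Ring A] (l : List (S × A)) :
    lsum (l.map fun q : S × A => (q.1, -q.2)) = -lsum l := by
  induction l with
  | nil => simp
  | cons q m ih => simp only [List.map_cons, lsum_cons, ih]; abel

/-- The key lemma: a `GoodL` representation of `0` evaluates to `0`. -/
theorem leval_eq_zero (T : UnitalAction K I A) (hc : T.Compatible) (t : S) :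
    ∀ l : List (S × A), GoodL T t l → lsum l = 0 → leval T l = 0 := by
  suffices H : ∀ (n : ℕ) (l : List (S × A)), l.length = n →
      GoodL T t l → lsum l = 0 → leval T l = 0 by
    intro l hl hs; exact H l.length l rfl hl hs
  intro n
  induction n with
  | zero =>
    intro l hlen _ _
    rw [List.length_eq_zero_iff.mp hlen]
    simp
  | succ n ih =>
    intro l hlen hgood hsum
    match l with
    | p :: rest =>
      have hlen' : rest.length = n := by simpa using hlen
      obtain ⟨hσ₀, habs₀⟩ := hgood p List.mem_cons_self
      set E := T.e (I.inv p.1) with hE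
      have hsum' : lsum rest = -p.2 := by
        rw [lsum_cons] at hsum
        exact (neg_eq_of_add_eq_zero_right hsum).symm
      have hEc : ∀ x : A, E * x = x * E := fun x => T.e_central (I.inv p.1) x
      set rest' := rest.map (fun q : S × A => (q.1, q.2 - E * q.2)) with hrest'
      have hgood' : GoodL T t rest' := by
        intro q hq
        rw [hrest', List.mem_map] at hq
        obtain ⟨q₀, hq₀, rfl⟩ := hq
        obtain ⟨h1, h2⟩ := hgood q₀ (List.mem_cons_of_mem p hq₀)
        refine ⟨h1, ?_⟩
        show T.e (I.inv q₀.1) * (q₀.2 - E * q₀.2) = q₀.2 - E * q₀.2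
        rw [mul_sub, h2, ← mul_assoc, ← hEc (T.e (I.inv q₀.1)), mul_assoc, h2]
      have h0 : lsum rest' = 0 := by
        rw [hrest', lsum_map_sub, hsum', mul_neg, habs₀]
        abel
      have hIH : leval T rest' = 0 :=
        ih rest' (by rw [hrest', List.length_map]; exact hlen') hgood' h0
      have hterm : ∀ q ∈ rest, T.θ q.1 (E * q.2) = T.θ p.1 q.2 := by
        intro q hq
        obtain ⟨h1, h2⟩ := hgood q (List.mem_cons_of_mem p hq)
        have hσ : sigmaRel q.1 p.1 := sigmaRel_trans I h1 (sigmaRel_symm hσ₀)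
        have h3 := hc q.1 p.1 hσ q.2
        rw [h2] at h3
        exact h3
      have hlv' : leval T rest' = (rest.map fun q : S × A => T.θ q.1 (q.2 - E * q.2)).sum := by
        rw [hrest', leval, List.map_map]
        rfl
      have hrestval : leval T rest = leval T rest' + T.θ p.1 (lsum rest) := by
        rw [leval, show (rest.map fun q : S × A => T.θ q.1 q.2)
            = rest.map fun q : S × A => (T.θ q.1 (q.2 - E * q.2) + T.θ p.1 q.2) from ?_]
        · rw [List.sum_map_add, hlv', theta_lsum]
        · refine List.map_congr_left (fun q hq => ?_)
          rw [← hterm q hq, ← T.theta_add]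
          congr 1
          abel
      rw [leval_cons, hrestval, hIH, hsum', T.theta_neg]
      abel

theorem leval_map_neg (T : UnitalAction K I A) (l : List (S × A)) :
    leval T (l.map fun q : S × A => (q.1, -q.2)) = -leval T l := by
  induction l with
  | nil => simp
  | cons q m ih =>
    rw [List.map_cons, leval_cons, leval_cons, ih]
    show T.θ q.1 (-q.2) + _ = _
    rw [T.theta_neg]
    abel

/-- Well-definedness of the evaluation. -/
theorem leval_congr (T : UnitalAction K I A) (hc : T.Compatible) (t : S) {l l' : List (S × A)}
    (h : GoodL T t l) (h' : GoodL T t l') (hx : lsum l = lsum l') : leval T l = leval T l' := by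
  set l'' := l ++ l'.map (fun q : S × A => (q.1, -q.2)) with hl''
  have hgood : GoodL T t l'' := by
    intro q hq
    rw [hl'', List.mem_append] at hq
    rcases hq with hq | hq
    · exact h q hq
    · rw [List.mem_map] at hq
      obtain ⟨q₀, hq₀, rfl⟩ := hq
      obtain ⟨h1, h2⟩ := h' q₀ hq₀
      exact ⟨h1, by show T.e (I.inv q₀.1) * -q₀.2 = -q₀.2; rw [mul_neg, h2]⟩
  have hzero : lsum l'' = 0 := by
    rw [hl'', lsum_append, lsum_map_neg, hx]
    abel
  have := T.leval_eq_zero hc t l'' hgood hzero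
  rw [hl'', leval_append] at this
  rw [T.leval_map_neg] at this
  have h4 : leval T l - leval T l' = 0 := by rwa [sub_eq_add_neg]
  exact sub_eq_zero.mp h4

/-- The induced partial action maps. -/
noncomputable def Theta (T : UnitalAction K I A) (t : S) (x : A) : A :=
  haveI := Classical.propDecidable (∃ l : List (S × A), GoodL T t l ∧ lsum l = x)
  if h : ∃ l : List (S × A), GoodL T t l ∧ lsum l = x then leval T h.choose else 0

theorem Theta_eq (T : UnitalAction K I A) (hc : T.Compatible) {t : S} {l : List (S × A)}
    (h : GoodL T t l) : Theta T t (lsum l) = leval T l := by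
  have hex : ∃ l' : List (S × A), GoodL T t l' ∧ lsum l' = lsum l := ⟨l, h, rfl⟩
  unfold Theta
  rw [dif_pos hex]
  exact T.leval_congr hc t hex.choose_spec.1 h hex.choose_spec.2

end UnitalAction

namespace UnitalAction

variable {K : Type*} [CommRing K] {S : Type*} [Monoid S] {I : InverseMonoidStr S}
  {A : Type*} [Ring A] [Algebra K A]

theorem lsum_map_smul (k : K) (l : List (S × A)) :
    lsum (l.map fun q : S × A => (q.1, k • q.2)) = k • lsum l := by
  induction l with
  | nil => simp
  | cons q m ih => rw [List.map_cons, lsum_cons, lsum_cons, ih, smul_add]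

theorem mem_dsub_iff (T : UnitalAction K I A) {t : S} {x : A} :
    x ∈ T.Dsub t ↔ ∃ l : List (S × A), DList T t l ∧ lsum l = x := by
  constructor
  · intro hx
    induction hx using Submodule.span_induction with
    | mem y hy =>
      obtain ⟨s, a, hσ, rfl⟩ := hy
      refine ⟨[(s, T.e s * a)], ?_, by simp⟩
      intro q hq
      rw [List.mem_singleton] at hq
      subst hq
      exact ⟨hσ, by show T.e s * (T.e s * a) = T.e s * a; rw [← mul_assoc, T.e_idem]⟩
    | zero => exact ⟨[], by intro q hq; simp at hq, by simp⟩
    | add y z hy hz ihy ihz =>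
      obtain ⟨l₁, h₁, rfl⟩ := ihy
      obtain ⟨l₂, h₂, rfl⟩ := ihz
      refine ⟨l₁ ++ l₂, ?_, by simp⟩
      intro q hq
      rcases List.mem_append.mp hq with hq | hq
      · exact h₁ q hq
      · exact h₂ q hq
    | smul k y hy ihy =>
      obtain ⟨l, hl, rfl⟩ := ihy
      refine ⟨l.map fun q : S × A => (q.1, k • q.2), ?_, lsum_map_smul k l⟩
      intro q hq
      rw [List.mem_map] at hq
      obtain ⟨q₀, hq₀, rfl⟩ := hq
      obtain ⟨h1, h2⟩ := hl q₀ hq₀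
      exact ⟨h1, by show T.e q₀.1 * (k • q₀.2) = k • q₀.2; rw [mul_smul_comm, h2]⟩
  · rintro ⟨l, hl, rfl⟩
    induction l with
    | nil => simp
    | cons q m ih =>
      rw [lsum_cons]
      refine Submodule.add_mem _ ?_ (ih fun p hp => hl p (List.mem_cons_of_mem q hp))
      obtain ⟨h1, h2⟩ := hl q List.mem_cons_self
      exact Submodule.subset_span ⟨q.1, q.2, h1, h2.symm⟩

/-- Product of the complementary idempotents of a range-form list. -/
def prodE (T : UnitalAction K I A) (l : List (S × A)) : A :=
  (l.map fun p => 1 - T.e p.1).prod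

@[simp] theorem prodE_nil (T : UnitalAction K I A) : prodE T ([] : List (S × A)) = 1 := rfl
@[simp] theorem prodE_cons (T : UnitalAction K I A) (p : S × A) (l : List (S × A)) :
    prodE T (p :: l) = (1 - T.e p.1) * prodE T l := by simp [prodE]

theorem lsum_mul_prodE (T : UnitalAction K I A) {g : S} :
    ∀ l : List (S × A), DList T g l → lsum l * prodE T l = 0 := by
  intro l
  induction l with
  | nil => simp
  | cons p rest ih =>
    intro hl
    obtain ⟨h1, h2⟩ := hl p List.mem_cons_self
    have hrest := fun q hq => hl q (List.mem_cons_of_mem p hq)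
    rw [lsum_cons, prodE_cons, add_mul]
    have hp2 : p.2 * (1 - T.e p.1) = 0 := by
      rw [mul_sub, mul_one, ← T.e_central, h2, sub_self]
    have hcomm : lsum rest * (1 - T.e p.1) = (1 - T.e p.1) * lsum rest := by
      rw [mul_sub, sub_mul, mul_one, one_mul, T.e_central]
    rw [← mul_assoc, hp2, zero_mul, zero_add, ← mul_assoc, hcomm, mul_assoc,
      ih hrest, mul_zero]

theorem comp_rep (T : UnitalAction K I A) {g h : S} {r : S} (hr : sigmaRel r h) {b : A}
    (hb : T.e r * b = b) :
    ∀ l : List (S × A), DList T g l →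
      ∃ m : List (S × S × A), PList T g h m ∧ msum m = b * (1 - prodE T l) := by
  intro l
  induction l with
  | nil => exact fun _ => ⟨[], by intro q hq; simp at hq, by simp⟩
  | cons p rest ih =>
    intro hl
    obtain ⟨h1, _⟩ := hl p List.mem_cons_self
    obtain ⟨m', hm', hv'⟩ := ih fun q hq => hl q (List.mem_cons_of_mem p hq)
    set P := prodE T rest with hP
    refine ⟨(p.1, r, T.e p.1 * (b * P)) :: m', ?_, ?_⟩
    · intro q hq
      rcases List.mem_cons.mp hq with hq | hq
      · subst hq
        refine ⟨h1, hr, ?_, ?_⟩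
        · show T.e p.1 * (T.e p.1 * (b * P)) = T.e p.1 * (b * P)
          rw [← mul_assoc, T.e_idem]
        · show T.e r * (T.e p.1 * (b * P)) = T.e p.1 * (b * P)
          rw [T.e_mul_comm, ← mul_assoc (T.e r) b P, hb]
      · exact hm' q hq
    · rw [msum_cons, hv', prodE_cons]
      show T.e p.1 * (b * P) + b * (1 - P) = b * (1 - (1 - T.e p.1) * P)
      have : b * (T.e p.1 * P) = T.e p.1 * (b * P) := by
        rw [← mul_assoc, ← T.e_central, mul_assoc]
      rw [← this]
      have expand : (1 : A) - (1 - T.e p.1) * P = (1 - P) + T.e p.1 * P := by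
        rw [sub_mul, one_mul]
        abel
      rw [expand, mul_add]
      abel

theorem inter_rep (T : UnitalAction K I A) {g h : S} {x : A} (hg : x ∈ T.Dsub g)
    (hh : x ∈ T.Dsub h) :
    ∃ m : List (S × S × A), PList T g h m ∧ msum m = x := by
  obtain ⟨l₁, hl₁, hx₁⟩ := T.mem_dsub_iff.mp hg
  obtain ⟨l₂, hl₂, hx₂⟩ := T.mem_dsub_iff.mp hh
  have hxq : x * (1 - prodE T l₁) = x := by
    rw [mul_sub, mul_one, ← hx₁, T.lsum_mul_prodE l₁ hl₁, sub_zero]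
  suffices H : ∀ l : List (S × A), DList T h l →
      ∃ m, PList T g h m ∧ msum m = lsum l * (1 - prodE T l₁) by
    obtain ⟨m, hm, hv⟩ := H l₂ hl₂
    exact ⟨m, hm, by rw [hv, hx₂, hxq]⟩
  intro l
  induction l with
  | nil => exact fun _ => ⟨[], by intro q hq; simp at hq, by simp⟩
  | cons p rest ih =>
    intro hl
    obtain ⟨h1, h2⟩ := hl p List.mem_cons_self
    obtain ⟨m₁, hm₁, hv₁⟩ := T.comp_rep h1 h2 l₁ hl₁
    obtain ⟨m₂, hm₂, hv₂⟩ := ih fun q hq => hl q (List.mem_cons_of_mem p hq)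
    refine ⟨m₁ ++ m₂, ?_, ?_⟩
    · intro q hq
      rcases List.mem_append.mp hq with hq | hq
      · exact hm₁ q hq
      · exact hm₂ q hq
    · rw [msum_append, hv₁, hv₂, lsum_cons, add_mul]

end UnitalAction

namespace UnitalAction

variable {K : Type*} [CommRing K] {S : Type*} [Monoid S] {I : InverseMonoidStr S}
  {A : Type*} [Ring A] [Algebra K A]

theorem lsum_map3 (m : List (S × S × A)) (g : S × S × A → S) (f : S × S × A → A) :
    lsum (m.map fun p => (g p, f p)) = (m.map f).sum := by
  rw [lsum, List.map_map]; rfl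

theorem leval_map3 (T : UnitalAction K I A) (m : List (S × S × A)) (g : S × S × A → S)
    (f : S × S × A → A) :
    leval T (m.map fun p => (g p, f p)) = (m.map fun p => T.θ (g p) (f p)).sum := by
  rw [leval, List.map_map]; rfl

theorem msum_eq (m : List (S × S × A)) : msum m = (m.map fun p => p.2.2).sum := rfl

end UnitalAction


/-- Let `θ` be a compatible unital action of an inverse monoid `S`
on a `K`-algebra `A`.  Then the family `{θ̃_g}_{g ∈ G(S)}` (σ-classes represented by
elements of `S`) with domains `D_g = Σ_{s∈g} 1_s A` is a partial action of the maximum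
group image `G(S)` on `A`; in particular `θ̃_g ∘ θ̃_h ≤ θ̃_{gh}` and
`θ̃_h(D_{h⁻¹} ∩ D_{h⁻¹g⁻¹}) = D_h ∩ D_{g⁻¹}` for all `g, h ∈ G(S)`. -/
theorem induced_partial_action {K : Type*} [CommRing K] {S : Type*} [Monoid S]
    (I : InverseMonoidStr S) {A : Type*} [Ring A] [Algebra K A]
    (T : UnitalAction K I A) (hcomp : T.Compatible) :
    ∃ Θ : S → A → A,
      -- each `Θ t` is given by the defining formula of `θ̃_{[t]}`
      (∀ (t : S) (n : ℕ) (s : Fin n → S) (a : Fin n → A),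
        (∀ j, sigmaRel (s j) t) → (∀ j, T.e (I.inv (s j)) * a j = a j) →
        Θ t (∑ j, a j) = ∑ j, T.θ (s j) (a j)) ∧
      -- (i) `D_1 = A` and `θ̃_1 = id`
      (T.Dsub (1 : S) = ⊤) ∧ (∀ x : A, Θ 1 x = x) ∧
      -- (ii) `θ̃_g(D_{g⁻¹} ∩ D_h) = D_g ∩ D_{gh}`
      (∀ u w : S,
        (Θ u) '' ((T.Dsub (I.inv u) ⊓ T.Dsub w : Submodule K A) : Set A)
          = ((T.Dsub u ⊓ T.Dsub (u * w) : Submodule K A) : Set A)) ∧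
      -- (iii) `θ̃_g ∘ θ̃_h = θ̃_{gh}` on `D_{h⁻¹} ∩ D_{h⁻¹ g⁻¹}` (so `θ̃_g∘θ̃_h ≤ θ̃_{gh}`)
      (∀ u v : S, ∀ x ∈ T.Dsub (I.inv v) ⊓ T.Dsub (I.inv (u * v)),
        Θ u (Θ v x) = Θ (u * v) x) := by
  classical
  refine ⟨UnitalAction.Theta T, ?_, ?_, ?_, ?_, ?_⟩
  · -- the defining formula
    intro t n s a hσ habs
    set l := List.ofFn (fun j => (s j, a j)) with hl
    have hgood : UnitalAction.GoodL T t l := by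
      intro p hp
      rw [hl, List.mem_ofFn] at hp
      obtain ⟨j, rfl⟩ := hp
      exact ⟨hσ j, habs j⟩
    have h1 : UnitalAction.lsum l = ∑ j, a j := by
      rw [hl, UnitalAction.lsum, List.map_ofFn, List.sum_ofFn]
      rfl
    have h2 : UnitalAction.leval T l = ∑ j, T.θ (s j) (a j) := by
      rw [hl, UnitalAction.leval, List.map_ofFn, List.sum_ofFn]
      rfl
    rw [← h1, T.Theta_eq hcomp hgood, h2]
  · -- D_1 = A
    rw [eq_top_iff]
    intro x _
    exact Submodule.subset_span ⟨1, x, sigmaRel_refl I 1, by rw [T.e_one, one_mul]⟩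
  · -- Θ 1 = id
    intro x
    have hgood : UnitalAction.GoodL T 1 [(1, x)] := by
      intro p hp
      rw [List.mem_singleton] at hp
      subst hp
      exact ⟨sigmaRel_refl I 1, by show T.e (I.inv 1) * x = x; rw [I.inv_one, T.e_one, one_mul]⟩
    have h1 := T.Theta_eq hcomp hgood
    rw [UnitalAction.lsum_cons, UnitalAction.lsum_nil, UnitalAction.leval_cons,
      UnitalAction.leval_nil, add_zero, add_zero] at h1
    rw [h1, T.theta_one]
  · -- (ii)
    intro u w
    ext y
    simp only [Set.mem_image, SetLike.mem_coe, Submodule.mem_inf]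
    constructor
    · rintro ⟨x, ⟨hx1, hx2⟩, rfl⟩
      obtain ⟨m, hm, hvx⟩ := T.inter_rep hx1 hx2
      have hgood : UnitalAction.GoodL T u (m.map fun p => (I.inv p.1, p.2.2)) := by
        intro q hq
        rw [List.mem_map] at hq
        obtain ⟨p, hp, rfl⟩ := hq
        obtain ⟨hσ1, hσ2, ha1, ha2⟩ := hm p hp
        refine ⟨?_, ?_⟩
        · have h3 := sigmaRel_inv I hσ1
          rwa [I.inv_inv] at h3
        · show T.e (I.inv (I.inv p.1)) * p.2.2 = p.2.2
          rw [I.inv_inv]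
          exact ha1
      have hls : UnitalAction.lsum (m.map fun p => (I.inv p.1, p.2.2)) = x := by
        rw [UnitalAction.lsum_map3, ← UnitalAction.msum_eq, hvx]
      have hThx : UnitalAction.Theta T u x
          = (m.map fun p => T.θ (I.inv p.1) p.2.2).sum := by
        rw [← hls, T.Theta_eq hcomp hgood, UnitalAction.leval_map3]
      refine ⟨?_, ?_⟩
      · refine T.mem_dsub_iff.mpr ⟨m.map fun p => (I.inv p.1, T.θ (I.inv p.1) p.2.2), ?_, ?_⟩
        · intro q hq
          rw [List.mem_map] at hq
          obtain ⟨p, hp, rfl⟩ := hq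
          obtain ⟨hσ1, hσ2, ha1, ha2⟩ := hm p hp
          refine ⟨?_, T.theta_ran (I.inv p.1) p.2.2⟩
          have h3 := sigmaRel_inv I hσ1
          rwa [I.inv_inv] at h3
        · rw [UnitalAction.lsum_map3, hThx]
      · refine T.mem_dsub_iff.mpr
          ⟨m.map fun p => (I.inv p.1 * p.2.1, T.θ (I.inv p.1) p.2.2), ?_, ?_⟩
        · intro q hq
          rw [List.mem_map] at hq
          obtain ⟨p, hp, rfl⟩ := hq
          obtain ⟨hσ1, hσ2, ha1, ha2⟩ := hm p hp
          have h3 := sigmaRel_inv I hσ1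
          rw [I.inv_inv] at h3
          exact ⟨sigmaRel_mul I h3 hσ2, T.e_mul_theta (I.inv p.1) p.2.1 ha2⟩
        · rw [UnitalAction.lsum_map3, hThx]
    · rintro ⟨hy1, hy2⟩
      obtain ⟨m, hm, hvy⟩ := T.inter_rep hy1 hy2
      refine ⟨(m.map fun p => T.θ (I.inv p.1) p.2.2).sum, ⟨?_, ?_⟩, ?_⟩
      · refine T.mem_dsub_iff.mpr ⟨m.map fun p => (I.inv p.1, T.θ (I.inv p.1) p.2.2), ?_, ?_⟩
        · intro q hq
          rw [List.mem_map] at hq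
          obtain ⟨p, hp, rfl⟩ := hq
          obtain ⟨hσ1, hσ2, ha1, ha2⟩ := hm p hp
          exact ⟨sigmaRel_inv I hσ1, T.theta_ran (I.inv p.1) p.2.2⟩
        · rw [UnitalAction.lsum_map3]
      · refine T.mem_dsub_iff.mpr
          ⟨m.map fun p => (I.inv p.1 * p.2.1, T.θ (I.inv p.1) p.2.2), ?_, ?_⟩
        · intro q hq
          rw [List.mem_map] at hq
          obtain ⟨p, hp, rfl⟩ := hq
          obtain ⟨hσ1, hσ2, ha1, ha2⟩ := hm p hp
          refine ⟨?_, T.e_mul_theta (I.inv p.1) p.2.1 ha2⟩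
          have hs1 : sigmaRel (I.inv p.1 * p.2.1) (I.inv u * (u * w)) :=
            sigmaRel_mul I (sigmaRel_inv I hσ1) hσ2
          have hs2 : sigmaRel (I.inv u * (u * w)) w := by
            rw [← mul_assoc]
            have h4 := sigmaRel_mul_right I w (sigmaRel_idem_one I (I.inv_mul_idem u))
            rwa [one_mul] at h4
          exact sigmaRel_trans I hs1 hs2
        · rw [UnitalAction.lsum_map3]
      · -- Theta u x = y
        have hgood : UnitalAction.GoodL T u (m.map fun p => (p.1, T.θ (I.inv p.1) p.2.2)) := by
          intro q hq
          rw [List.mem_map] at hq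
          obtain ⟨p, hp, rfl⟩ := hq
          obtain ⟨hσ1, hσ2, ha1, ha2⟩ := hm p hp
          exact ⟨hσ1, T.theta_ran (I.inv p.1) p.2.2⟩
        have hls : UnitalAction.lsum (m.map fun p => (p.1, T.θ (I.inv p.1) p.2.2))
            = (m.map fun p => T.θ (I.inv p.1) p.2.2).sum := by
          rw [UnitalAction.lsum_map3]
        rw [← hls, T.Theta_eq hcomp hgood, UnitalAction.leval_map3, ← hvy,
          UnitalAction.msum_eq]
        refine congrArg List.sum (List.map_congr_left fun p hp => ?_)
        obtain ⟨hσ1, hσ2, ha1, ha2⟩ := hm p hp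
        have h5 := T.theta_inv (I.inv p.1) p.2.2
        rw [I.inv_inv] at h5
        rw [h5, ha1]
  · -- (iii)
    intro u v x hx
    obtain ⟨hx1, hx2⟩ := Submodule.mem_inf.mp hx
    obtain ⟨m, hm, hvx⟩ := T.inter_rep hx1 hx2
    -- Θ v x
    have hgoodv : UnitalAction.GoodL T v (m.map fun p => (I.inv p.1, p.2.2)) := by
      intro q hq
      rw [List.mem_map] at hq
      obtain ⟨p, hp, rfl⟩ := hq
      obtain ⟨hσ1, hσ2, ha1, ha2⟩ := hm p hp
      refine ⟨?_, ?_⟩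
      · have h3 := sigmaRel_inv I hσ1
        rwa [I.inv_inv] at h3
      · show T.e (I.inv (I.inv p.1)) * p.2.2 = p.2.2
        rw [I.inv_inv]
        exact ha1
    have hlsv : UnitalAction.lsum (m.map fun p => (I.inv p.1, p.2.2)) = x := by
      rw [UnitalAction.lsum_map3, ← UnitalAction.msum_eq, hvx]
    have hTv : UnitalAction.Theta T v x = (m.map fun p => T.θ (I.inv p.1) p.2.2).sum := by
      rw [← hlsv, T.Theta_eq hcomp hgoodv, UnitalAction.leval_map3]
    -- Θ u (Θ v x)
    have hgoodu : UnitalAction.GoodL T u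
        (m.map fun p => (I.inv p.2.1 * p.1, T.θ (I.inv p.1) p.2.2)) := by
      intro q hq
      rw [List.mem_map] at hq
      obtain ⟨p, hp, rfl⟩ := hq
      obtain ⟨hσ1, hσ2, ha1, ha2⟩ := hm p hp
      refine ⟨?_, ?_⟩
      · have h1' : sigmaRel (I.inv p.2.1) (u * v) := by
          have h3 := sigmaRel_inv I hσ2
          rwa [I.inv_inv] at h3
        have hs1 : sigmaRel (I.inv p.2.1 * p.1) ((u * v) * I.inv v) := sigmaRel_mul I h1' hσ1
        have hs2 : sigmaRel ((u * v) * I.inv v) u := by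
          rw [mul_assoc]
          have h4 := sigmaRel_mul_left I u (sigmaRel_idem_one I (I.mul_inv_idem v))
          rwa [mul_one] at h4
        exact sigmaRel_trans I hs1 hs2
      · show T.e (I.inv (I.inv p.2.1 * p.1)) * T.θ (I.inv p.1) p.2.2 = T.θ (I.inv p.1) p.2.2
        rw [I.mul_inv_rev, I.inv_inv]
        exact T.e_mul_theta (I.inv p.1) p.2.1 ha2
    have hlsu : UnitalAction.lsum (m.map fun p => (I.inv p.2.1 * p.1, T.θ (I.inv p.1) p.2.2))
        = UnitalAction.Theta T v x := by
      rw [UnitalAction.lsum_map3, hTv]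
    -- Θ (u v) x
    have hgooduv : UnitalAction.GoodL T (u * v) (m.map fun p => (I.inv p.2.1, p.2.2)) := by
      intro q hq
      rw [List.mem_map] at hq
      obtain ⟨p, hp, rfl⟩ := hq
      obtain ⟨hσ1, hσ2, ha1, ha2⟩ := hm p hp
      refine ⟨?_, ?_⟩
      · have h3 := sigmaRel_inv I hσ2
        rwa [I.inv_inv] at h3
      · show T.e (I.inv (I.inv p.2.1)) * p.2.2 = p.2.2
        rw [I.inv_inv]
        exact ha2
    have hlsuv : UnitalAction.lsum (m.map fun p => (I.inv p.2.1, p.2.2)) = x := by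
      rw [UnitalAction.lsum_map3, ← UnitalAction.msum_eq, hvx]
    rw [← hlsu, T.Theta_eq hcomp hgoodu, ← hlsuv, T.Theta_eq hcomp hgooduv,
      UnitalAction.leval_map3, UnitalAction.leval_map3]
    refine congrArg List.sum (List.map_congr_left fun p hp => ?_)
    obtain ⟨hσ1, hσ2, ha1, ha2⟩ := hm p hp
    -- θ_{inv r * s} (θ_{inv s} c) = θ_{inv r} c
    have hstep1 : T.θ (I.inv p.2.1 * p.1) (T.θ (I.inv p.1) p.2.2)
        = T.θ (I.inv p.2.1 * (p.1 * I.inv p.1)) p.2.2 := by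
      rw [← T.theta_comp, mul_assoc]
    have hσp : sigmaRel (I.inv p.2.1 * (p.1 * I.inv p.1)) (I.inv p.2.1) := by
      have h4 := sigmaRel_mul_left I (I.inv p.2.1) (sigmaRel_idem_one I (I.mul_inv_idem p.1))
      rwa [mul_one] at h4
    have h5 := hcomp (I.inv p.2.1 * (p.1 * I.inv p.1)) (I.inv p.2.1) hσp p.2.2
    rw [I.inv_inv, ha2, I.mul_inv_rev, I.inv_idem (I.mul_inv_idem p.1), I.inv_inv,
      T.key_absorb hcomp p.1 p.2.1 ha1 ha2] at h5
    rw [hstep1, h5]
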